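/- Let λ > 0 and c ∈ ℝ, and let X̃ = [l̃, ũ] ⊂ ℝ be a closed interval. Every minimizer x* of h(x) = δ_{X̃}(x) + λ‖x‖₀ + (1/2)(x - c)² satisfies: if x* ≠ 0 then |x*| ≥ min of the set ({|l̃|, |ũ|, √(2λ)} \ {0}). -/

import Mathlib

/-- The ℓ0 "norm" on ℝ: `0` if `x = 0`, else `1`. -/
noncomputable def l0 (x : ℝ) : ℝ := if x = 0 then 0 else 1

theorem nonzero_minimizer_lower_bound (lam : ℝ) (hlam : 0 < lam) (c lt ut : ℝ)
    (hlu : lt ≤ ut) (xs : ℝ) (hmem : xs ∈ Set.Icc lt ut)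
    (hmin : ∀ y ∈ Set.Icc lt ut,
      lam * l0 xs + (xs - c) ^ 2 / 2 ≤ lam * l0 y + (y - c) ^ 2 / 2)
    (hne : xs ≠ 0) :
    sInf (({|lt|, |ut|, Real.sqrt (2 * lam)} : Set ℝ) \ {0}) ≤ |xs| := by
  obtain ⟨hlx, hxu⟩ := hmem
  set S : Set ℝ := {|lt|, |ut|, Real.sqrt (2 * lam)} with hSdef
  have hbd : BddBelow (S \ {0}) := ((Set.toFinite S).diff (t := {0})).bddBelow
  have mem_le : ∀ a, a ∈ S → a ≠ 0 → a ≤ |xs| → sInf (S \ {0}) ≤ |xs| :=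
    fun a ha h0 hle => le_trans (csInf_le hbd ⟨ha, h0⟩) hle
  have hl0xs : l0 xs = 1 := if_neg hne
  have hkey : ∀ y ∈ Set.Icc lt ut, (xs - c) ^ 2 ≤ (y - c) ^ 2 := by
    intro y hy
    have h := hmin y hy
    have h2 : l0 y ≤ 1 := by unfold l0; split <;> norm_num
    rw [hl0xs] at h
    nlinarith
  by_cases hl : 0 < lt
  · exact mem_le |lt| (by simp [hSdef]) (by positivity)
      (by rw [abs_of_pos hl, abs_of_pos (lt_of_lt_of_le hl hlx)]; exact hlx)
  by_cases hu : ut < 0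
  · exact mem_le |ut| (by simp [hSdef]) (by simp [ne_of_lt hu])
      (by rw [abs_of_neg hu, abs_of_neg (lt_of_le_of_lt hxu hu)]; linarith)
  push_neg at hl hu
  have h0mem : (0 : ℝ) ∈ Set.Icc lt ut := ⟨hl, hu⟩
  by_cases h1 : xs = lt
  · exact mem_le |lt| (by simp [hSdef]) (by rw [← h1]; exact abs_ne_zero.mpr hne)
      (le_of_eq (by rw [h1]))
  by_cases h2 : xs = ut
  · exact mem_le |ut| (by simp [hSdef]) (by rw [← h2]; exact abs_ne_zero.mpr hne)
      (le_of_eq (by rw [h2]))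
  · have hlt : lt < xs := lt_of_le_of_ne hlx (Ne.symm h1)
    have hut : xs < ut := lt_of_le_of_ne hxu h2
    have hxc : xs = c := by
      by_contra hxc
      rcases lt_or_gt_of_ne hxc with hcase | hcase
      · have hy : min c ut ∈ Set.Icc lt ut :=
          ⟨le_min (le_of_lt (lt_of_le_of_lt hlx hcase)) hlu, min_le_right _ _⟩
        have := hkey _ hy
        have hgt : xs < min c ut := lt_min hcase hut
        have hle : min c ut ≤ c := min_le_left _ _
        nlinarith
      · have hy : max c lt ∈ Set.Icc lt ut :=
          ⟨le_max_right _ _, max_le (le_of_lt (lt_of_lt_of_le hcase hxu)) hlu⟩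
        have := hkey _ hy
        have hgt : max c lt < xs := max_lt hcase hlt
        have hle : c ≤ max c lt := le_max_left _ _
        nlinarith
    have h0 := hmin 0 h0mem
    rw [hl0xs] at h0
    have hl00 : l0 0 = 0 := if_pos rfl
    rw [hl00] at h0
    have h2lam : 2 * lam ≤ xs ^ 2 := by
      rw [hxc] at h0 ⊢
      nlinarith
    have hsq : Real.sqrt (2 * lam) ≤ |xs| := by
      rw [← Real.sqrt_sq_eq_abs]
      exact Real.sqrt_le_sqrt h2lam
    exact mem_le _ (by simp [hSdef])
      (ne_of_gt (Real.sqrt_pos.mpr (by linarith))) hsq
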